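/- arXiv:1810.08967 — 3 statements merged into one kernel-verified Lean document; each statement's English description precedes it below -/
import Mathlib

section
/- Let $f,g:\mathbb{N}\to\mathbb{T}$ be completely multiplicative functions and suppose there exist $k,l\ge 1$, $t\in\mathbb{R}$, and a rational $\lambda = r/s$ such that $f(n)^k = n^{it}$ and $g(n)^l = n^{i\lambda t}$ for all $n$, with $t\ne 0$. Then the sequence $\{(f(n), g(n+1))\}_{n\ge 1}$ is not dense in $\mathbb{T}^2$. -/
open Complex Filter

def CompletelyMultiplicative (f : ℕ → ℂ) : Prop :=
  f 1 = 1 ∧ ∀ m n : ℕ, f (m * n) = f m * f n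


lemma norm_pow_sub_pow' (a b : ℂ) (ha : ‖a‖ = 1) (hb : ‖b‖ = 1) (m : ℕ) :
    ‖a ^ m - b ^ m‖ ≤ m * ‖a - b‖ := by
  induction m with
  | zero => simp
  | succ m ih =>
    have : a ^ (m + 1) - b ^ (m + 1) = (a ^ m - b ^ m) * b + a ^ m * (a - b) := by ring
    rw [this]
    calc ‖(a ^ m - b ^ m) * b + a ^ m * (a - b)‖
        ≤ ‖(a ^ m - b ^ m) * b‖ + ‖a ^ m * (a - b)‖ := norm_add_le _ _
      _ = ‖a ^ m - b ^ m‖ + ‖a - b‖ := by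
          rw [norm_mul, norm_mul, norm_pow, ha, hb, one_pow, one_mul, mul_one]
      _ ≤ m * ‖a - b‖ + ‖a - b‖ := by linarith
      _ = (m + 1 : ℕ) * ‖a - b‖ := by push_cast; ring

lemma cpow_nat (x : ℂ) (hx : x ≠ 0) (c : ℂ) (m : ℕ) : (x ^ c) ^ m = x ^ (c * m) := by
  induction m with
  | zero => simp
  | succ m ih =>
    rw [pow_succ, ih, ← Complex.cpow_add _ _ hx]
    congr 1
    push_cast; ring

lemma natCast_cpow_eq_exp (n : ℕ) (hn : 1 ≤ n) (θ : ℝ) :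
    (n : ℂ) ^ (Complex.I * (θ : ℂ)) = Complex.exp ((θ * Real.log n : ℝ) * I) := by
  have hne : (n : ℂ) ≠ 0 := Nat.cast_ne_zero.mpr (by omega)
  rw [Complex.cpow_def_of_ne_zero hne, ← Complex.natCast_log]
  congr 1
  push_cast
  ring

lemma limit_lemma (τ : ℝ) :
    ∃ N : ℕ, 1 ≤ N ∧ ∀ n : ℕ, N ≤ n →
      ‖Complex.exp ((τ * (Real.log n - Real.log (n + 1)) : ℝ) * I) - 1‖ < 1 / 2 := by
  refine ⟨⌈4 * |τ|⌉₊ + 1, by omega, fun n hn => ?_⟩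
  have hn1 : 1 ≤ n := le_trans (by omega) hn
  have hnpos : (0 : ℝ) < n := by exact_mod_cast hn1
  have hτn : 4 * |τ| < n := by
    calc 4 * |τ| ≤ (⌈4 * |τ|⌉₊ : ℝ) := Nat.le_ceil _
      _ < n := by exact_mod_cast hn
  set x : ℝ := τ * (Real.log n - Real.log (n + 1)) with hx
  have hlogle : Real.log (n + 1) - Real.log n ≤ 1 / n := by
    rw [← Real.log_div (by positivity) (by positivity)]
    have := Real.log_le_sub_one_of_pos (x := ((n : ℝ) + 1) / n) (by positivity)
    have h2 : ((n : ℝ) + 1) / n - 1 = 1 / n := by field_simp; ring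
    linarith
  have hlogmono : Real.log n ≤ Real.log (n + 1) := Real.log_le_log hnpos (by linarith)
  have habs : |x| ≤ |τ| * (1 / n) := by
    rw [hx, abs_mul]
    have : |Real.log ↑n - Real.log (↑n + 1)| = Real.log (↑n + 1) - Real.log ↑n := by
      rw [abs_sub_comm]
      exact abs_of_nonneg (by linarith)
    rw [this]
    exact mul_le_mul_of_nonneg_left hlogle (abs_nonneg _)
  have hxlt : |x| < 1 / 4 := by
    have h1 : |τ| * (1 / n) < 1 / 4 := by
      rw [mul_one_div, div_lt_iff₀ hnpos]
      linarith
    linarith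
  have hz : ‖(x : ℂ) * I‖ = |x| := by
    rw [norm_mul, Complex.norm_I, mul_one, Complex.norm_real, Real.norm_eq_abs]
  have := Complex.norm_exp_sub_one_le (x := (x : ℂ) * I) (by rw [hz]; linarith)
  rw [hz] at this
  linarith

set_option maxHeartbeats 1000000 in
lemma key (f g : ℕ → ℂ)
    (hfT : ∀ n ≥ 1, ‖f n‖ = 1) (hgT : ∀ n ≥ 1, ‖g n‖ = 1)
    (A B : ℕ) (hB : 1 ≤ B) (τ : ℝ)
    (hfA : ∀ n ≥ 1, (f n) ^ A = (n : ℂ) ^ (Complex.I * (τ : ℂ)))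
    (hgB : ∀ n ≥ 1, (g n) ^ B = (n : ℂ) ^ (Complex.I * ((-τ : ℝ) : ℂ)))
    (H : ∀ z w : ℂ, ‖z‖ = 1 → ‖w‖ = 1 → ∀ ε > 0,
        ∃ n ≥ 1, ‖f n - z‖ + ‖g (n + 1) - w‖ < ε) : False := by
  -- product representation
  obtain ⟨N, hN1, hNlim⟩ := limit_lemma τ
  have hprod : ∀ n : ℕ, 1 ≤ n → f n ^ A * g (n + 1) ^ B
      = Complex.exp ((τ * (Real.log n - Real.log (n + 1)) : ℝ) * I) := by
    intro n hn
    rw [hfA n hn, hgB (n + 1) (by omega)]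
    rw [natCast_cpow_eq_exp n hn τ, natCast_cpow_eq_exp (n + 1) (by omega) (-τ),
      ← Complex.exp_add]
    congr 1
    push_cast
    ring
  classical
  have hBpos : (0:ℝ) < B := by exact_mod_cast hB
  have hNpos : (0:ℝ) < (N:ℝ) + 1 := by positivity
  have hπ := Real.pi_pos
  set c0 : ℝ := Real.pi / (B * (N + 1)) with hc0
  have hc0pos : 0 < c0 := by rw [hc0]; positivity
  set θ : Fin (N + 1) → ℝ := fun j => Real.pi / (2 * B) + j * c0 with hθ
  have hθdiff : ∀ j₁ j₂ : Fin (N + 1), |θ j₁ - θ j₂| < 2 * Real.pi := by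
    intro j₁ j₂
    have h1 : θ j₁ - θ j₂ = ((j₁ : ℝ) - (j₂ : ℝ)) * c0 := by rw [hθ]; ring
    have hj1 : (j₁ : ℝ) ≤ N := by exact_mod_cast Nat.lt_succ_iff.mp j₁.isLt
    have hj2 : (j₂ : ℝ) ≤ N := by exact_mod_cast Nat.lt_succ_iff.mp j₂.isLt
    have hj1' : (0:ℝ) ≤ (j₁ : ℝ) := Nat.cast_nonneg _
    have hj2' : (0:ℝ) ≤ (j₂ : ℝ) := Nat.cast_nonneg _
    have habs : |(j₁ : ℝ) - (j₂ : ℝ)| ≤ N := abs_sub_le_of_nonneg_of_le hj1' hj1 hj2' hj2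
    have hc0le : c0 ≤ Real.pi / ((N:ℝ) + 1) := by
      rw [hc0]
      apply div_le_div_of_nonneg_left hπ.le hNpos
      have hB1 : (1:ℝ) ≤ B := by exact_mod_cast hB
      nlinarith [hB1, hNpos]
    calc |θ j₁ - θ j₂| = |(j₁ : ℝ) - (j₂ : ℝ)| * c0 := by
          rw [h1, abs_mul, abs_of_pos hc0pos]
      _ ≤ (N:ℝ) * c0 := mul_le_mul_of_nonneg_right habs hc0pos.le
      _ ≤ (N:ℝ) * (Real.pi / ((N:ℝ) + 1)) := mul_le_mul_of_nonneg_left hc0le (Nat.cast_nonneg _)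
      _ < 2 * Real.pi := by
          rw [mul_div_assoc']
          rw [div_lt_iff₀ hNpos]
          nlinarith
  have hwinj : Function.Injective (fun j : Fin (N + 1) => Complex.exp ((θ j : ℂ) * I)) := by
    intro j₁ j₂ hjj
    simp only at hjj
    have hone : Complex.exp (((θ j₁ - θ j₂ : ℝ) : ℂ) * I) = 1 := by
      rw [show (((θ j₁ - θ j₂ : ℝ) : ℂ) * I) = ((θ j₁ : ℝ) : ℂ) * I - ((θ j₂ : ℝ) : ℂ) * I by
        push_cast; ring, Complex.exp_sub, hjj, div_self (Complex.exp_ne_zero _)]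
    obtain ⟨m, hm⟩ := Complex.exp_eq_one_iff.mp hone
    have hm' : ((θ j₁ - θ j₂ : ℝ) : ℂ) = ((m * (2 * Real.pi) : ℝ) : ℂ) := by
      have hI : ((θ j₁ - θ j₂ : ℝ) : ℂ) * I = ((m * (2 * Real.pi) : ℝ) : ℂ) * I := by
        rw [hm]; push_cast; ring
      exact mul_right_cancel₀ Complex.I_ne_zero hI
    have hmr : θ j₁ - θ j₂ = (m : ℝ) * (2 * Real.pi) := by exact_mod_cast hm'
    have hm0 : m = 0 := by
      by_contra hm0
      have : (1:ℝ) ≤ |(m:ℝ)| := by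
        rw [← Int.cast_abs]
        exact_mod_cast Int.one_le_abs hm0
      have := hθdiff j₁ j₂
      rw [hmr, abs_mul, abs_of_pos (by positivity : (0:ℝ) < 2 * Real.pi)] at this
      nlinarith
    rw [hm0] at hmr
    simp at hmr
    have hθeq : (j₁ : ℝ) * c0 = (j₂ : ℝ) * c0 := by
      have : θ j₁ = θ j₂ := by linarith
      rw [hθ] at this; simp only at this; linarith
    have : (j₁ : ℝ) = (j₂ : ℝ) := mul_right_cancel₀ hc0pos.ne' hθeq
    have : (j₁ : ℕ) = (j₂ : ℕ) := by exact_mod_cast this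
    exact Fin.ext this
  obtain ⟨j, hj⟩ : ∃ j : Fin (N + 1), ∀ m ∈ Finset.Icc 1 N,
      Complex.exp ((θ j : ℂ) * I) ≠ g (m + 1) := by
    by_contra hcon
    push_neg at hcon
    choose mm hmm hval using hcon
    obtain ⟨j₁, -, j₂, -, hne, heq⟩ := Finset.exists_ne_map_eq_of_card_lt_of_maps_to
      (s := (Finset.univ : Finset (Fin (N + 1)))) (t := Finset.Icc 1 N)
      (by simp [Nat.card_Icc]) (fun j _ => hmm j)
    exact hne (hwinj (by simp only; rw [hval j₁, hval j₂, heq]))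
  set w : ℂ := Complex.exp ((θ j : ℂ) * I) with hwdef
  have hw : ‖w‖ = 1 := by
    rw [hwdef, Complex.norm_exp_ofReal_mul_I]
  have hwB : w ^ B = Complex.exp (((B * θ j : ℝ) : ℂ) * I) := by
    rw [hwdef, ← Complex.exp_nat_mul]; congr 1; push_cast; ring
  have hre : (w ^ B).re = Real.cos ((B:ℝ) * θ j) := by
    rw [hwB]; exact Complex.exp_ofReal_mul_I_re _
  have hjN : (j : ℝ) ≤ N := by exact_mod_cast Nat.lt_succ_iff.mp j.isLt
  have hBθ : (B : ℝ) * θ j = Real.pi / 2 + (j : ℝ) * (Real.pi / ((N:ℝ) + 1)) := by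
    rw [hθ, hc0]; simp only; field_simp
  have hcos : Real.cos ((B:ℝ) * θ j) ≤ 0 := by
    apply Real.cos_nonpos_of_pi_div_two_le_of_le
    · rw [hBθ]
      have : 0 ≤ (j : ℝ) * (Real.pi / ((N:ℝ) + 1)) := by positivity
      linarith
    · rw [hBθ]
      have h1 : (j : ℝ) * (Real.pi / ((N:ℝ) + 1)) ≤ (N:ℝ) * (Real.pi / ((N:ℝ) + 1)) :=
        mul_le_mul_of_nonneg_right hjN (by positivity)
      have h2 : (N:ℝ) * (Real.pi / ((N:ℝ) + 1)) ≤ Real.pi := by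
        rw [mul_div_assoc', div_le_iff₀ hNpos]; nlinarith
      linarith
  have hneicc : (Finset.Icc 1 N).Nonempty := ⟨1, Finset.mem_Icc.mpr ⟨le_refl 1, hN1⟩⟩
  set δ := (Finset.Icc 1 N).inf' hneicc (fun m => ‖f m - 1‖ + ‖g (m + 1) - w‖) with hδ
  have hδpos : 0 < δ := by
    rw [hδ, Finset.lt_inf'_iff]
    intro m hm
    have h1 : 0 < ‖g (m + 1) - w‖ := norm_sub_pos_iff.mpr (fun h => hj m hm h.symm)
    have h2 := norm_nonneg (f m - 1)
    linarith
  set ε := min δ (1 / (2 * ((A:ℝ) + B + 1))) with hε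
  have hεpos : 0 < ε := lt_min hδpos (by positivity)
  obtain ⟨n, hn1, hlt⟩ := H 1 w norm_one hw ε hεpos
  have hnN : N < n := by
    by_contra hle
    push_neg at hle
    have hmem : n ∈ Finset.Icc 1 N := Finset.mem_Icc.mpr ⟨hn1, hle⟩
    have h1 : δ ≤ ‖f n - 1‖ + ‖g (n + 1) - w‖ :=
      Finset.inf'_le (fun m => ‖f m - 1‖ + ‖g (m + 1) - w‖) hmem
    have h2 : ε ≤ δ := min_le_left _ _
    linarith
  have hfn1 : ‖f n - 1‖ < ε :=
    lt_of_le_of_lt (le_add_of_nonneg_right (norm_nonneg _)) hlt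
  have hgn1 : ‖g (n + 1) - w‖ < ε :=
    lt_of_le_of_lt (le_add_of_nonneg_left (norm_nonneg _)) hlt
  have hfnorm : ‖f n‖ = 1 := hfT n hn1
  have hgnorm : ‖g (n + 1)‖ = 1 := hgT (n + 1) (by omega)
  have hbound : ‖f n ^ A * g (n + 1) ^ B - w ^ B‖ ≤
      A * ‖f n - 1‖ + B * ‖g (n + 1) - w‖ := by
    have hterm : ‖f n ^ A - 1‖ ≤ A * ‖f n - 1‖ := by
      have := norm_pow_sub_pow' (f n) 1 hfnorm norm_one A
      simpa using this
    have htermg : ‖g (n + 1) ^ B - w ^ B‖ ≤ B * ‖g (n + 1) - w‖ :=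
      norm_pow_sub_pow' _ _ hgnorm hw B
    have hfA1 : ‖f n ^ A‖ = 1 := by rw [norm_pow, hfnorm, one_pow]
    have hwB1 : ‖w ^ B‖ = 1 := by rw [norm_pow, hw, one_pow]
    have hdecomp : f n ^ A * g (n + 1) ^ B - w ^ B
        = f n ^ A * (g (n + 1) ^ B - w ^ B) + (f n ^ A - 1) * w ^ B := by ring
    rw [hdecomp]
    calc ‖f n ^ A * (g (n + 1) ^ B - w ^ B) + (f n ^ A - 1) * w ^ B‖
        ≤ ‖f n ^ A * (g (n + 1) ^ B - w ^ B)‖ + ‖(f n ^ A - 1) * w ^ B‖ :=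
          norm_add_le _ _
      _ = ‖g (n + 1) ^ B - w ^ B‖ + ‖f n ^ A - 1‖ := by
          rw [norm_mul, norm_mul, hfA1, hwB1, one_mul, mul_one]
      _ ≤ B * ‖g (n + 1) - w‖ + A * ‖f n - 1‖ := add_le_add htermg hterm
      _ = A * ‖f n - 1‖ + B * ‖g (n + 1) - w‖ := by ring
  have hhalf1 : ‖f n ^ A * g (n + 1) ^ B - w ^ B‖ < 1 / 2 := by
    have hε2 : ε ≤ 1 / (2 * ((A:ℝ) + B + 1)) := min_le_right _ _
    have hA0 : (0:ℝ) ≤ A := Nat.cast_nonneg _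
    have hx0 := norm_nonneg (f n - 1)
    have hy0 := norm_nonneg (g (n + 1) - w)
    have key1 : (A:ℝ) * ‖f n - 1‖ + B * ‖g (n + 1) - w‖ < ((A:ℝ) + B) * ε := by
      have t1 : (A:ℝ) * ‖f n - 1‖ ≤ A * ε := mul_le_mul_of_nonneg_left hfn1.le hA0
      have t2 : (B:ℝ) * ‖g (n + 1) - w‖ < B * ε := by
        apply mul_lt_mul_of_pos_left hgn1 hBpos
      linarith [t1, t2, mul_comm ((A:ℝ) + B) ε]
      -- ((A:ℝ)+B)*ε = A*ε + B*ε
    have key2 : ((A:ℝ) + B) * ε < 1 / 2 := by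
      have h3 : ((A:ℝ) + B) * ε ≤ ((A:ℝ) + B) * (1 / (2 * ((A:ℝ) + B + 1))) :=
        mul_le_mul_of_nonneg_left hε2 (by positivity)
      have h4 : ((A:ℝ) + B) * (1 / (2 * ((A:ℝ) + B + 1))) < 1 / 2 := by
        rw [mul_one_div, div_lt_div_iff₀ (by positivity) (by norm_num)]
        nlinarith
      linarith
    linarith
  have hhalf2 : ‖f n ^ A * g (n + 1) ^ B - 1‖ < 1 / 2 := by
    rw [hprod n hn1]; exact hNlim n hnN.le
  have hcge : (1:ℝ) ≤ ‖w ^ B - 1‖ := by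
    have h1 : (w ^ B - 1).re = Real.cos ((B:ℝ) * θ j) - 1 := by
      rw [Complex.sub_re, Complex.one_re, hre]
    have h2 : |(w ^ B - 1).re| ≤ ‖w ^ B - 1‖ := by
      exact Complex.abs_re_le_norm _
    have h3 : (1:ℝ) ≤ |(w ^ B - 1).re| := by
      rw [h1, abs_of_nonpos (by linarith)]; linarith
    linarith
  have htri : ‖w ^ B - 1‖ ≤ ‖w ^ B - f n ^ A * g (n + 1) ^ B‖ +
      ‖f n ^ A * g (n + 1) ^ B - 1‖ := by
    have := norm_add_le (w ^ B - f n ^ A * g (n + 1) ^ B) (f n ^ A * g (n + 1) ^ B - 1)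
    simpa using this
  have h5 : ‖w ^ B - f n ^ A * g (n + 1) ^ B‖ = ‖f n ^ A * g (n + 1) ^ B - w ^ B‖ :=
    norm_sub_rev _ _
  linarith

lemma conj_cpow_nat (n : ℕ) (hn : 1 ≤ n) (θ : ℝ) :
    (starRingEnd ℂ) ((n : ℂ) ^ (Complex.I * (θ : ℂ)))
      = (n : ℂ) ^ (Complex.I * ((-θ : ℝ) : ℂ)) := by
  rw [natCast_cpow_eq_exp n hn θ, natCast_cpow_eq_exp n hn (-θ), ← Complex.exp_conj]
  congr 1
  rw [map_mul, Complex.conj_I, Complex.conj_ofReal]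
  push_cast
  ring

lemma norm_conj' (z : ℂ) : ‖(starRingEnd ℂ) z‖ = ‖z‖ := by
  exact Complex.norm_conj z

lemma abs_div_sign (x y t : ℝ) (hy : y ≠ 0) :
    ∃ σ : ℝ, (σ = 1 ∨ σ = -1) ∧ |y| * ((x / y) * t) = σ * (|x| * t) := by
  rcases abs_cases x with ⟨hx, hx'⟩ | ⟨hx, hx'⟩ <;>
    rcases abs_cases y with ⟨hy', hy''⟩ | ⟨hy', hy''⟩
  · exact ⟨1, Or.inl rfl, by rw [hx, hy']; field_simp; try ring⟩
  · exact ⟨-1, Or.inr rfl, by rw [hx, hy']; field_simp; try ring⟩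
  · exact ⟨-1, Or.inr rfl, by rw [hx, hy']; field_simp; try ring⟩
  · exact ⟨1, Or.inl rfl, by rw [hx, hy']; field_simp; try ring⟩

theorem pair_not_dense_of_archimedean_rational_ratio
    (f g : ℕ → ℂ) (hf : CompletelyMultiplicative f) (hg : CompletelyMultiplicative g)
    (hfT : ∀ n ≥ 1, ‖f n‖ = 1) (hgT : ∀ n ≥ 1, ‖g n‖ = 1)
    (k l : ℕ) (hk : 1 ≤ k) (hl : 1 ≤ l) (t : ℝ) (ht : t ≠ 0)
    (r s : ℤ) (hs : s ≠ 0)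
    (hfk : ∀ n ≥ 1, (f n) ^ k = (n : ℂ) ^ (Complex.I * (t : ℂ)))
    (hgl : ∀ n ≥ 1, (g n) ^ l = (n : ℂ) ^ (Complex.I * (((r : ℝ) / (s : ℝ)) * t : ℝ))) :
    ¬ (∀ z w : ℂ, ‖z‖ = 1 → ‖w‖ = 1 → ∀ ε > 0,
        ∃ n ≥ 1, ‖f n - z‖ + ‖g (n + 1) - w‖ < ε) := by
  intro H
  have hsr : ((s : ℝ)) ≠ 0 := Int.cast_ne_zero.mpr hs
  obtain ⟨σ, hσ, hsign⟩ := abs_div_sign (r : ℝ) (s : ℝ) t hsr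
  set a : ℕ := r.natAbs with ha
  set b : ℕ := s.natAbs with hb
  have hb1 : 1 ≤ b := Int.natAbs_pos.mpr hs
  have hacast : (a : ℝ) = |(r : ℝ)| := by rw [ha, Nat.cast_natAbs, Int.cast_abs]
  have hbcast : (b : ℝ) = |(s : ℝ)| := by rw [hb, Nat.cast_natAbs, Int.cast_abs]
  set τ : ℝ := (a : ℝ) * t with hτ
  have hB1 : 1 ≤ l * b := Nat.one_le_iff_ne_zero.mpr (by positivity)
  have hfA : ∀ n ≥ 1, f n ^ (k * a) = (n : ℂ) ^ (Complex.I * (τ : ℂ)) := by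
    intro n hn
    have hne : (n : ℂ) ≠ 0 := Nat.cast_ne_zero.mpr (by omega)
    rw [pow_mul, hfk n hn, cpow_nat _ hne _ a]
    congr 1
    rw [hτ]
    push_cast
    ring
  have hgB' : ∀ n ≥ 1, g n ^ (l * b) = (n : ℂ) ^ (Complex.I * ((σ * τ : ℝ) : ℂ)) := by
    intro n hn
    have hne : (n : ℂ) ≠ 0 := Nat.cast_ne_zero.mpr (by omega)
    rw [pow_mul, hgl n hn, cpow_nat _ hne _ b]
    congr 1
    have hgreal : (b : ℝ) * (((r : ℝ) / (s : ℝ)) * t) = σ * τ := by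
      rw [hbcast, hτ, hacast]
      exact hsign
    calc Complex.I * ((((r : ℝ) / (s : ℝ)) * t : ℝ) : ℂ) * (b : ℂ)
        = Complex.I * (((b : ℝ) * (((r : ℝ) / (s : ℝ)) * t) : ℝ) : ℂ) := by
          push_cast; ring
      _ = Complex.I * ((σ * τ : ℝ) : ℂ) := by rw [hgreal]
  rcases hσ with hσ1 | hσ1
  · -- σ = 1 : conjugate g
    set g' : ℕ → ℂ := fun n => (starRingEnd ℂ) (g n) with hg'
    have hg'T : ∀ n ≥ 1, ‖g' n‖ = 1 := fun n hn => by
      rw [hg']; simp only; rw [norm_conj']; exact hgT n hn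
    have hg'B : ∀ n ≥ 1, g' n ^ (l * b) = (n : ℂ) ^ (Complex.I * ((-τ : ℝ) : ℂ)) := by
      intro n hn
      rw [hg']; simp only
      have hστ : σ * τ = τ := by rw [hσ1]; ring
      rw [← map_pow, hgB' n hn, hστ, conj_cpow_nat n hn τ]
    have H' : ∀ z w : ℂ, ‖z‖ = 1 → ‖w‖ = 1 → ∀ ε > 0,
        ∃ n ≥ 1, ‖f n - z‖ + ‖g' (n + 1) - w‖ < ε := by
      intro z w hz hw ε hε
      obtain ⟨n, hn, hlt⟩ := H z ((starRingEnd ℂ) w) hz (by rw [norm_conj']; exact hw) ε hε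
      refine ⟨n, hn, ?_⟩
      have heq : ‖g' (n + 1) - w‖ = ‖g (n + 1) - (starRingEnd ℂ) w‖ := by
        rw [hg']; simp only
        rw [← norm_conj' (g (n + 1) - (starRingEnd ℂ) w), map_sub, Complex.conj_conj]
      rw [heq]
      exact hlt
    exact key f g' hfT hg'T (k * a) (l * b) hB1 τ hfA hg'B H'
  · -- σ = -1 : use g directly
    have hgB : ∀ n ≥ 1, g n ^ (l * b) = (n : ℂ) ^ (Complex.I * ((-τ : ℝ) : ℂ)) := by
      intro n hn
      have hστ : σ * τ = -τ := by rw [hσ1]; ring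
      rw [hgB' n hn, hστ]
    exact key f g hfT hgT (k * a) (l * b) hB1 τ hfA hgB H
end

section
/- Suppose $f:\mathbb{N}\to\mathbb{T}$ is completely multiplicative and there is no pair $(m,u)\in\mathbb{N}\times\mathbb{R}$ with $f(n)^m = n^{iu}$ for all $n$. If for every prime $p\le N$ there exist $m_p\ge 1$ and $u_p\in\mathbb{R}$ with $f(p)^{k m_p} = p^{i u_p}$, and additionally $f(p)^k = p^{it}$ for all primes $p> N$, then there exists a prime $p_0 \le N$ such that $f(p_0)^k p_0^{-it}$ is not a root of unity of any order. -/
open Complex Filter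

lemma aux_all_n (f : ℕ → ℂ) (hf : CompletelyMultiplicative f) (K : ℕ) (u : ℝ)
    (hp : ∀ p : ℕ, p.Prime → (f p) ^ K = (p : ℂ) ^ (Complex.I * (u : ℂ))) :
    ∀ n : ℕ, n ≥ 1 → (f n) ^ K = (n : ℂ) ^ (Complex.I * (u : ℂ)) := by
  intro n
  induction n using Nat.recOnMul with
  | zero => intro h; omega
  | one => intro _; simp [hf.1]
  | prime p hpp => intro _; exact hp p hpp
  | mul m n hm hn =>
    intro h
    have hm0 : m ≥ 1 := Nat.one_le_iff_ne_zero.2 (by rintro rfl; simp at h)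
    have hn0 : n ≥ 1 := Nat.one_le_iff_ne_zero.2 (by rintro rfl; simp at h)
    rw [hf.2, mul_pow, hm hm0, hn hn0, Nat.cast_mul,
      show (m : ℂ) = ((m : ℝ) : ℂ) by push_cast; ring,
      show (n : ℂ) = ((n : ℝ) : ℂ) by push_cast; ring,
      ← Complex.mul_cpow_ofReal_nonneg (Nat.cast_nonneg m) (Nat.cast_nonneg n)]

theorem exists_prime_with_nonrootofunity_twist
    (f : ℕ → ℂ) (hf : CompletelyMultiplicative f) (hfT : ∀ n ≥ 1, ‖f n‖ = 1)
    (k N : ℕ) (hk : 1 ≤ k) (t : ℝ)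
    (hnot : ¬ ∃ m : ℕ, 1 ≤ m ∧ ∃ u : ℝ, ∀ n ≥ 1,
        (f n) ^ m = (n : ℂ) ^ (Complex.I * (u : ℂ)))
    (hsmall : ∀ p : ℕ, p.Prime → p ≤ N → ∃ m : ℕ, 1 ≤ m ∧ ∃ u : ℝ,
        (f p) ^ (k * m) = (p : ℂ) ^ (Complex.I * (u : ℂ)))
    (hlarge : ∀ p : ℕ, p.Prime → N < p →
        (f p) ^ k = (p : ℂ) ^ (Complex.I * (t : ℂ))) :
    ∃ p₀ : ℕ, p₀.Prime ∧ p₀ ≤ N ∧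
      ∀ m : ℕ, 1 ≤ m →
        ((f p₀) ^ k * (p₀ : ℂ) ^ (-(Complex.I * (t : ℂ)))) ^ m ≠ 1 := by
  by_contra hcon
  push_neg at hcon
  -- for every prime p ≤ N, there is m ≥ 1 with ((f p)^k * p^{-it})^m = 1
  have hroot : ∀ p : ℕ, p.Prime → p ≤ N → ∃ m : ℕ, 1 ≤ m ∧
      ((f p) ^ k * (p : ℂ) ^ (-(Complex.I * (t : ℂ)))) ^ m = 1 := by
    intro p hp hpN
    obtain ⟨m, hm1, hm⟩ := hcon p hp hpN
    exact ⟨m, hm1, hm⟩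
  classical
  set S : Finset ℕ := (Finset.range (N + 1)).filter Nat.Prime with hS
  choose! mp hmp1 hmp using hroot
  set M : ℕ := ∏ p ∈ S, mp p with hM
  have hM1 : 1 ≤ M := by
    apply Nat.one_le_iff_ne_zero.2
    rw [hM]
    apply Finset.prod_ne_zero_iff.2
    intro p hp
    simp only [hS, Finset.mem_filter, Finset.mem_range] at hp
    exact Nat.one_le_iff_ne_zero.1 (hmp1 p hp.2 (by omega))
  -- key: for every prime p, (f p)^(k*M) = p^(I*(t*M))
  have hkey : ∀ p : ℕ, p.Prime → (f p) ^ (k * M) = (p : ℂ) ^ (Complex.I * ((t * M : ℝ) : ℂ)) := by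
    intro p hp
    have hcM : (p : ℂ) ^ (Complex.I * ((t * M : ℝ) : ℂ))
        = ((p : ℂ) ^ (Complex.I * (t : ℂ))) ^ M := by
      rw [← Complex.cpow_nat_mul]
      congr 1
      push_cast
      ring
    have hfk : (f p) ^ (k * M) = ((f p) ^ k) ^ M := by rw [pow_mul]
    by_cases hpN : p ≤ N
    · have hpS : p ∈ S := by simp [hS, Finset.mem_filter, Finset.mem_range, hp]; omega
      have hdvd : mp p ∣ M := Finset.dvd_prod_of_mem mp hpS
      obtain ⟨c, hc⟩ := hdvd
      have h1 : ((f p) ^ k * (p : ℂ) ^ (-(Complex.I * (t : ℂ)))) ^ M = 1 := by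
        rw [hc, pow_mul, hmp p hp hpN, one_pow]
      have hpne : (p : ℂ) ≠ 0 := Nat.cast_ne_zero.2 hp.pos.ne'
      have hcne : (p : ℂ) ^ (Complex.I * (t : ℂ)) ≠ 0 := by
        simp [Complex.cpow_eq_zero_iff, hpne]
      rw [Complex.cpow_neg] at h1
      rw [hcM, hfk]
      field_simp [mul_pow] at h1 ⊢
      rw [div_pow, div_eq_one_iff_eq (pow_ne_zero _ hcne)] at h1
      exact h1
    · rw [hcM, hfk, hlarge p hp (by omega)]
  have := aux_all_n f hf (k * M) (t * M) hkey
  exact hnot ⟨k * M, Nat.one_le_iff_ne_zero.2 (by positivity), t * M, this⟩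
end

section
/- Let $f:\mathbb{N}\to\mathbb{T}$ be completely multiplicative. Suppose that for every integer $M\ge 1$ there is a prime $p$ such that $f(p) = \xi_p\, p^{iu}$ where $\xi_p = e(a/b)$ is a root of unity with $\gcd(a,b)=1$ and $b > Mk$. Then for every $z\in\mathbb{T}$, every $\eta>0$, every $\delta>0$ and $u\in\mathbb{R}$ with $u=0$, there exist a prime $p$ and $m\in\mathbb{N}$ with $k\mid m$ such that $|f(p)^m - z| < \eta$ and $|p^{ium}-1|<\delta$. -/
open Complex Filter

noncomputable def e (t : ℝ) : ℂ := Complex.exp (2 * Real.pi * Complex.I * t)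

lemma norm_exp_mul_I_sub_one_le (t : ℝ) : ‖Complex.exp ((t : ℂ) * Complex.I) - 1‖ ≤ |t| := by
  have h : Complex.exp ((t : ℂ) * Complex.I) - 1
      = ((Real.cos t - 1 : ℝ) : ℂ) + ((Real.sin t : ℝ) : ℂ) * Complex.I := by
    rw [Complex.exp_mul_I]
    push_cast
    ring
  rw [h, Complex.norm_def, Complex.normSq_add_mul_I]
  have ha := Real.cos_two_mul' (t/2)
  rw [show 2*(t/2) = t by ring] at ha
  have hb := Real.sin_sq_add_cos_sq (t/2)
  have h2 : Real.sin t ^ 2 + Real.cos t ^ 2 = 1 := Real.sin_sq_add_cos_sq t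
  have h3 : (Real.cos t - 1)^2 + Real.sin t ^2 = (2 * Real.sin (t/2))^2 := by nlinarith
  rw [h3, Real.sqrt_sq_eq_abs]
  have h4 : |Real.sin (t/2)| ≤ |t/2| := Real.abs_sin_le_abs
  rw [abs_mul]
  calc |(2:ℝ)| * |Real.sin (t/2)| ≤ |(2:ℝ)| * |t/2| := by
        apply mul_le_mul_of_nonneg_left h4 (abs_nonneg _)
    _ = |t| := by rw [abs_of_pos (by norm_num : (0:ℝ) < 2), abs_div, abs_of_pos (by norm_num : (0:ℝ) < 2)]; ring
      
lemma norm_e (x : ℝ) : ‖e x‖ = 1 := by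
  unfold e
  have : 2 * (Real.pi:ℂ) * Complex.I * x = ((2 * Real.pi * x : ℝ):ℂ) * Complex.I := by
    push_cast; ring
  rw [this, Complex.norm_exp, Complex.mul_I_re]
  simp

lemma e_sub_e_norm_le (x y : ℝ) : ‖e x - e y‖ ≤ 2 * Real.pi * |x - y| := by
  have h : e x - e y = e y * (Complex.exp (((2*Real.pi*(x-y) : ℝ):ℂ) * Complex.I) - 1) := by
    unfold e
    rw [mul_sub, mul_one, ← Complex.exp_add]
    push_cast
    ring_nf
  rw [h, norm_mul, norm_e, one_mul]
  calc ‖Complex.exp (((2*Real.pi*(x-y) : ℝ):ℂ) * Complex.I) - 1‖ ≤ |2*Real.pi*(x-y)| :=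
      norm_exp_mul_I_sub_one_le _
    _ = 2 * Real.pi * |x - y| := by
      rw [abs_mul, abs_of_pos (by positivity : (0:ℝ) < 2*Real.pi)]

lemma e_pow (x : ℝ) (n : ℕ) : e x ^ n = e (n * x) := by
  unfold e
  rw [← Complex.exp_nat_mul]
  push_cast
  ring_nf

lemma e_add_int (x : ℝ) (n : ℤ) : e (x + n) = e x := by
  unfold e
  push_cast
  rw [mul_add, Complex.exp_add]
  have : 2 * (Real.pi:ℂ) * Complex.I * (n:ℂ) = (n:ℂ) * (2 * Real.pi * Complex.I) := by ring
  rw [this, Complex.exp_int_mul_two_pi_mul_I, mul_one]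

set_option maxHeartbeats 1000000 in
theorem steering_values_at_primes_unbounded_order
    (f : ℕ → ℂ) (hf : CompletelyMultiplicative f) (hfT : ∀ n ≥ 1, ‖f n‖ = 1)
    (k : ℕ) (hk : 1 ≤ k) (u : ℝ) (hu : u = 0)
    (hbig : ∀ M : ℕ, 1 ≤ M → ∃ p : ℕ, p.Prime ∧ ∃ a : ℤ, ∃ b : ℕ, 1 ≤ b ∧
        Int.gcd a (b : ℤ) = 1 ∧ M * k < b ∧
        f p = e ((a : ℝ) / (b : ℝ)) * (p : ℂ) ^ (Complex.I * (u : ℂ))) :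
    ∀ z : ℂ, ‖z‖ = 1 → ∀ η > (0 : ℝ), ∀ δ > (0 : ℝ),
      ∃ p : ℕ, p.Prime ∧ ∃ m : ℕ, 1 ≤ m ∧ k ∣ m ∧
        ‖(f p) ^ m - z‖ < η ∧
        ‖(p : ℂ) ^ (Complex.I * ((u * m : ℝ) : ℂ)) - 1‖ < δ := by
  subst hu
  intro z hz η hη δ hδ
  set M : ℕ := ⌈Real.pi / η⌉₊ + 1 with hM
  obtain ⟨p, hp, a, b, hb1, hgcd, hMk, hfp⟩ := hbig M (by omega)
  -- f p = e (a/b)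
  have hfp' : f p = e ((a:ℝ)/(b:ℝ)) := by
    rw [hfp]
    norm_num
  -- setup
  set g : ℕ := Nat.gcd k b with hgdef
  have hg1 : 1 ≤ g := Nat.gcd_pos_of_pos_left b (by omega)
  set k' : ℕ := k / g with hk'def
  set b' : ℕ := b / g with hb'def
  have hkg : k = g * k' := (Nat.div_mul_cancel (Nat.gcd_dvd_left k b)).symm.trans (mul_comm _ _)
  have hbg : b = g * b' := (Nat.div_mul_cancel (Nat.gcd_dvd_right k b)).symm.trans (mul_comm _ _)
  have hb'1 : 1 ≤ b' :=
    Nat.div_pos (Nat.le_of_dvd (by omega) (Nat.gcd_dvd_right k b)) (by omega)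
  -- coprimality
  have hcop1 : IsCoprime (a : ℤ) (b' : ℤ) := by
    have : IsCoprime (a : ℤ) (b : ℤ) := Int.isCoprime_iff_gcd_eq_one.mpr hgcd
    exact IsCoprime.of_isCoprime_of_dvd_right this
      (Int.natCast_dvd_natCast.mpr ⟨g, by rw [hbg]; ring⟩)
  have hcop2 : IsCoprime ((k':ℕ) : ℤ) ((b':ℕ) : ℤ) := by
    rw [Int.isCoprime_iff_gcd_eq_one, Int.gcd_natCast_natCast]
    exact Nat.coprime_div_gcd_div_gcd (by omega)
  have hcop : IsCoprime ((a * k' : ℤ)) ((b':ℕ) : ℤ) := IsCoprime.mul_left hcop1 hcop2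
  -- gamma and ell
  obtain ⟨γ, hγ⟩ : ∃ γ : ℝ, γ = z.arg / (2 * Real.pi) := ⟨_, rfl⟩
  set ℓ : ℤ := round (γ * b / g) with hℓ
  -- find r
  obtain ⟨x, y, hxy⟩ := hcop
  set r₀ : ℤ := x * ℓ with hr₀
  have hdvd0 : ((b':ℕ) : ℤ) ∣ a * k' * r₀ - ℓ := by
    have : a * k' * r₀ - ℓ = ℓ * (x * (a * k') - 1) := by rw [hr₀]; ring
    rw [this]
    have h1 : x * (a * k') - 1 = -(y * b') := by linarith [hxy]
    rw [h1]
    exact ⟨-(ℓ * y), by ring⟩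
  set r : ℕ := (r₀ % (b':ℤ)).toNat + b' with hr
  have hrval : (r : ℤ) = r₀ % (b':ℤ) + b' := by
    rw [hr]
    push_cast
    rw [Int.toNat_of_nonneg (Int.emod_nonneg _ (Int.natCast_ne_zero.mpr (by omega)))]
  have hdvdr : ((b':ℕ) : ℤ) ∣ (r : ℤ) - r₀ := by
    rw [hrval, Int.emod_def]
    exact ⟨-(r₀ / b') + 1, by ring⟩
  have hdvd : ((b':ℕ) : ℤ) ∣ a * k' * r - ℓ := by
    have : a * k' * (r:ℤ) - ℓ = a * k' * ((r:ℤ) - r₀) + (a * k' * r₀ - ℓ) := by ring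
    rw [this]
    exact dvd_add (Dvd.dvd.mul_left hdvdr _) hdvd0
  set m : ℕ := k * r with hm
  have hm1 : 1 ≤ m := by
    have : 1 ≤ r := by omega
    calc 1 ≤ k * 1 := by omega
      _ ≤ k * r := Nat.mul_le_mul_left k this
  refine ⟨p, hp, m, hm1, ⟨r, rfl⟩, ?_, ?_⟩
  · -- main estimate
    obtain ⟨t, ht⟩ := hdvd
    have key : (a : ℤ) * m = g * ℓ + t * b := by
      have : (a:ℤ) * m = (g:ℤ) * (a * k' * r) := by
        rw [hm, hkg]; push_cast; ring
      rw [this, hbg]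
      push_cast
      have h2 : (a : ℤ) * k' * r = ℓ + b' * t := by linarith [ht]
      rw [h2]; ring
    -- f p ^ m = e (g*ℓ/b)
    have hb0 : (b : ℝ) ≠ 0 := by positivity
    have step1 : f p ^ m = e ((m : ℝ) * ((a:ℝ)/(b:ℝ))) := by rw [hfp', e_pow]
    have step2 : (m : ℝ) * ((a:ℝ)/(b:ℝ)) = (g:ℝ) * (ℓ:ℝ) / b + ((t : ℤ) : ℝ) := by
      have : ((a : ℤ) * m : ℝ) = ((g * ℓ + t * b : ℤ) : ℝ) := by exact_mod_cast congrArg (Int.cast : ℤ → ℝ) key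
      push_cast at this ⊢
      field_simp
      linarith
    have step3 : f p ^ m = e ((g:ℝ) * (ℓ:ℝ) / b) := by
      rw [step1, step2, e_add_int]
    -- z = e γ
    have hπ : Real.pi ≠ 0 := Real.pi_ne_zero
    have hze : z = e γ := by
      have h1 : (‖z‖ : ℂ) * Complex.exp (z.arg * Complex.I) = z :=
        Complex.norm_mul_exp_arg_mul_I z
      rw [show ‖z‖ = 1 from hz] at h1
      rw [← h1]
      unfold e
      rw [Complex.ofReal_one, one_mul]
      congr 1
      rw [hγ]
      push_cast
      have hπC : (Real.pi:ℂ) ≠ 0 := by exact_mod_cast hπ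
      field_simp
    rw [step3, hze]
    calc ‖e ((g:ℝ) * (ℓ:ℝ) / b) - e γ‖ ≤ 2 * Real.pi * |(g:ℝ) * (ℓ:ℝ) / b - γ| :=
        e_sub_e_norm_le _ _
      _ < η := by
        have hbpos : (0:ℝ) < b := by positivity
        have hgpos : (0:ℝ) < g := by exact_mod_cast hg1
        have hround : |γ * b / g - ℓ| ≤ 1/2 := abs_sub_round _
        have h5 : |(g:ℝ) * (ℓ:ℝ) / b - γ| = (g / b) * |γ * b / g - ℓ| := by
          rw [abs_sub_comm, ← abs_of_pos (show (0:ℝ) < g/b by positivity), ← abs_mul]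
          congr 1
          field_simp
        have h6 : |(g:ℝ) * (ℓ:ℝ) / b - γ| ≤ (g / b) * (1/2) := by
          rw [h5]
          exact mul_le_mul_of_nonneg_left hround (by positivity)
        have hgk : (g:ℝ) ≤ k := by exact_mod_cast Nat.le_of_dvd (by omega) (Nat.gcd_dvd_left k b)
        have hbM : (M * k : ℝ) < b := by exact_mod_cast hMk
        have hkpos : (0:ℝ) < k := by exact_mod_cast hk
        have hMpos : (0:ℝ) < M := by exact_mod_cast (show 0 < M by omega)
        have hMη : Real.pi / η < M := by
          have : Real.pi / η ≤ ⌈Real.pi / η⌉₊ := Nat.le_ceil _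
          rw [hM]; push_cast; linarith
        -- 2π * (g/b * 1/2) = π g / b ≤ π k / b < π k / (M k) = π/M < η
        have key2 : Real.pi * ((g:ℝ)/b) < η := by
          have h7 : (g:ℝ)/b ≤ (k:ℝ)/b := by gcongr
          have h8 : (k:ℝ)/b < (k:ℝ)/(M*k) := by gcongr
          have h9 : (k:ℝ)/(M*k) = 1/M := by
            rw [mul_comm, ← div_div, div_self (ne_of_gt hkpos)]
          have h10 : Real.pi * (1/(M:ℝ)) < η := by
            rw [div_lt_iff₀ hη] at hMη
            rw [mul_one_div, div_lt_iff₀ hMpos]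
            linarith
          have hπpos := Real.pi_pos
          calc Real.pi * ((g:ℝ)/b) ≤ Real.pi * ((k:ℝ)/b) := by nlinarith
            _ < Real.pi * (1/(M:ℝ)) := by rw [← h9]; nlinarith
            _ < η := h10
        calc 2 * Real.pi * |(g:ℝ) * (ℓ:ℝ) / b - γ| ≤ 2 * Real.pi * ((g/b) * (1/2)) := by
              apply mul_le_mul_of_nonneg_left h6 (by positivity)
          _ = Real.pi * ((g:ℝ)/b) := by ring
          _ < η := key2
  · -- second condition trivial since u = 0
    have : ((0 : ℝ) * (m:ℝ) : ℝ) = (0:ℝ) := by ring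
    simp only [this, Complex.ofReal_zero, mul_zero, Complex.cpow_zero, sub_self, norm_zero]
    exact hδ
end
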